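/- Let (Q,·) be a pentagonal quasigroup with x·y = (ax + (1−a)y) mod n, so a⁴ − a³ + a² − a + 1 ≡ 0 (mod n). Then its parastrophes satisfy: x∘₁y = ((1−a³−a)x + (a³+a)y) mod n, x∘₂y = (−a⁴x + (a⁴+1)y) mod n, x∘₃y = ((a⁴+1)x − a⁴y) mod n, x∘₄y = ((a³+a)x + (1−a−a³)y) mod n, and x∘₅y = ((1−a)x + ay) mod n. -/
import Mathlib

/-- A pentagonal quasigroup: a quasigroup (unique left/right division)
satisfying idempotency, mediality and the pentagonal identity. -/
def IsPentagonal {Q : Type*} (m : Q → Q → Q) : Prop :=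
  (∀ a b : Q, ∃! x, m a x = b) ∧
  (∀ a b : Q, ∃! x, m x a = b) ∧
  (∀ x, m x x = x) ∧
  (∀ x y z u, m (m x y) (m z u) = m (m x z) (m y u)) ∧
  (∀ x y, m (m (m (m x y) x) y) x = y)

theorem pentagonal_parastrophes (n : ℕ) (a : ZMod n)
    (hpoly : a ^ 4 - a ^ 3 + a ^ 2 - a + 1 = 0)
    (m : ZMod n → ZMod n → ZMod n)
    (hm : ∀ x y : ZMod n, m x y = a * x + (1 - a) * y)
    (hpq : IsPentagonal m) :
    (∀ x y : ZMod n, m x ((1 - a ^ 3 - a) * x + (a ^ 3 + a) * y) = y) ∧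
    (∀ x y : ZMod n, m (-(a ^ 4) * x + (a ^ 4 + 1) * y) y = x) ∧
    (∀ x y : ZMod n, m ((a ^ 4 + 1) * x + -(a ^ 4) * y) x = y) ∧
    (∀ x y : ZMod n, m y ((a ^ 3 + a) * x + (1 - a - a ^ 3) * y) = x) ∧
    (∀ x y : ZMod n, m y x = (1 - a) * x + a * y) := by
  refine ⟨fun x y => ?_, fun x y => ?_, fun x y => ?_, fun x y => ?_, fun x y => ?_⟩ <;>
    rw [hm]
  · linear_combination (x - y) * hpoly
  · linear_combination (a + 1) * (y - x) * hpoly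
  · linear_combination (a + 1) * (x - y) * hpoly
  · linear_combination (y - x) * hpoly
  · ring
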